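/- Let p be an odd prime, m a positive integer, and α an integer with α ≡ 1 mod p^m. Then for all positive integers i and j, α^i·(α^{ij} - 1)/(α^i - 1) ≡ j + (α-1)·i·j·(j+1)/2 mod p^{2m}, where (α^{ij}-1)/(α^i-1) denotes the integer 1 + α^i + α^{2i} + ... + α^{(j-1)i}. -/

import Mathlib

lemma gauss_aux (j : ℕ) : (∑ t ∈ Finset.range j, (t + 1)) * 2 = j * (j + 1) := by
  induction j with
  | zero => simp
  | succ n ih => rw [Finset.sum_range_succ, add_mul, ih]; ring

lemma modeq_sum_aux (n : ℤ) (s : Finset ℕ) (f g : ℕ → ℤ)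
    (h : ∀ t ∈ s, f t ≡ g t [ZMOD n]) :
    (∑ t ∈ s, f t) ≡ (∑ t ∈ s, g t) [ZMOD n] := by
  classical
  induction s using Finset.induction_on with
  | empty => simp
  | insert _ _ hx ih =>
    rw [Finset.sum_insert hx, Finset.sum_insert hx]
    exact (h _ (Finset.mem_insert_self _ _)).add
      (ih fun t ht => h t (Finset.mem_insert_of_mem ht))

theorem geom_sum_congr (p m : ℕ) (hp : p.Prime) (hodd : Odd p) (hm : 1 ≤ m) (α : ℤ)
    (hα : (p : ℤ) ^ m ∣ α - 1) (i j : ℕ) (hi : 1 ≤ i) (hj : 1 ≤ j) :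
    α ^ i * (∑ t ∈ Finset.range j, α ^ (t * i)) ≡
      (j : ℤ) + (α - 1) * (i : ℤ) * ((j * (j + 1) / 2 : ℕ) : ℤ) [ZMOD (p : ℤ) ^ (2 * m)] := by
  have hdd : ((p : ℤ) ^ (2 * m)) ∣ (α - 1) * (α - 1) := by
    rw [two_mul, pow_add]; exact mul_dvd_mul hα hα
  have key : ∀ n : ℕ, α ^ n ≡ 1 + (n : ℤ) * (α - 1) [ZMOD (p : ℤ) ^ (2 * m)] := by
    intro n
    induction n with
    | zero => simp
    | succ n ih =>
      have h0 : ((n : ℤ)) * ((α - 1) * (α - 1)) ≡ 0 [ZMOD (p : ℤ) ^ (2 * m)] :=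
        (Int.modEq_zero_iff_dvd).mpr (hdd.mul_left _)
      calc α ^ (n + 1) = α ^ n * α := pow_succ α n
        _ ≡ (1 + (n : ℤ) * (α - 1)) * α [ZMOD (p : ℤ) ^ (2 * m)] := ih.mul_right α
        _ = (1 + ((n : ℕ) + 1 : ℤ) * (α - 1)) + (n : ℤ) * ((α - 1) * (α - 1)) := by ring
        _ ≡ (1 + ((n : ℕ) + 1 : ℤ) * (α - 1)) + 0 [ZMOD (p : ℤ) ^ (2 * m)] :=
            (Int.ModEq.refl _).add h0
        _ = 1 + ((n + 1 : ℕ) : ℤ) * (α - 1) := by push_cast; ring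
  have hrw : α ^ i * (∑ t ∈ Finset.range j, α ^ (t * i)) =
      ∑ t ∈ Finset.range j, α ^ ((t + 1) * i) := by
    rw [Finset.mul_sum]
    refine Finset.sum_congr rfl fun t _ => ?_
    rw [← pow_add]; congr 1; ring
  have hnat : ∑ t ∈ Finset.range j, (t + 1) = j * (j + 1) / 2 := by
    have h1 := gauss_aux j
    omega
  have hcast : ((j * (j + 1) / 2 : ℕ) : ℤ) = ∑ t ∈ Finset.range j, ((t : ℤ) + 1) := by
    rw [← hnat]
    push_cast
    rfl
  rw [hrw]
  calc ∑ t ∈ Finset.range j, α ^ ((t + 1) * i)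
      ≡ ∑ t ∈ Finset.range j, (1 + (((t + 1) * i : ℕ) : ℤ) * (α - 1))
        [ZMOD (p : ℤ) ^ (2 * m)] := modeq_sum_aux _ _ _ _ fun t _ => key _
    _ = (j : ℤ) + (α - 1) * (i : ℤ) * ((j * (j + 1) / 2 : ℕ) : ℤ) := by
        rw [hcast, Finset.sum_add_distrib, Finset.mul_sum]
        simp only [Finset.sum_const, Finset.card_range, nsmul_eq_mul, mul_one]
        push_cast
        congr 1
        exact Finset.sum_congr rfl fun t _ => by ring
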